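/- arXiv:1806.07756 — 6 statements merged into one kernel-verified Lean document; each statement's English description precedes it below -/
import Mathlib

section
/- Let N, M ≥ 1, let Ω ⊆ ℂ^N be a connected open set, and let f = (f_1,…,f_M) : Ω → ℂ^M be real analytic. Suppose that for all indices r, s ∈ {1,…,M}, all j, k ∈ {1,…,N}, and every z ∈ Ω one has (∂f_r/∂z_j)(z) · (∂f_s/∂z̄_k)(z) = 0. Then f is holomorphic on Ω or the componentwise complex conjugate z ↦ conj(f(z)) is holomorphic on Ω. (Dichotomy step in the proof of Theorem A.) -/
/-- The Wirtinger derivative `∂g/∂z_j` of a function `g : ℂ^n → ℂ`, defined from the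
real Fréchet derivative. -/
noncomputable def wirtingerDz {n : ℕ} (g : (Fin n → ℂ) → ℂ) (z : Fin n → ℂ) (j : Fin n) : ℂ :=
  (1 / 2) * (fderiv ℝ g z (Pi.single j 1) - Complex.I * fderiv ℝ g z (Pi.single j Complex.I))

/-- The Wirtinger derivative `∂g/∂z̄_j` of a function `g : ℂ^n → ℂ`, defined from the
real Fréchet derivative. -/
noncomputable def wirtingerDzbar {n : ℕ} (g : (Fin n → ℂ) → ℂ) (z : Fin n → ℂ) (j : Fin n) : ℂ :=
  (1 / 2) * (fderiv ℝ g z (Pi.single j 1) + Complex.I * fderiv ℝ g z (Pi.single j Complex.I))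

open Complex in
lemma fderiv_component {N M : ℕ} {f : (Fin N → ℂ) → (Fin M → ℂ)} {z : Fin N → ℂ}
    (hd : DifferentiableAt ℝ f z) (r : Fin M) :
    fderiv ℝ (fun w => f w r) z
      = (ContinuousLinearMap.proj r : ((Fin M → ℂ)) →L[ℝ] ℂ).comp (fderiv ℝ f z) :=
  ((ContinuousLinearMap.proj r : ((Fin M → ℂ)) →L[ℝ] ℂ).hasFDerivAt.comp z
    hd.hasFDerivAt).fderiv

open Complex in
lemma clinear_of_single {N M : ℕ} (L : (Fin N → ℂ) →L[ℝ] (Fin M → ℂ))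
    (h : ∀ k, L (Pi.single k Complex.I) = Complex.I • L (Pi.single k 1)) :
    ∀ (c : ℂ) (v : Fin N → ℂ), L (c • v) = c • L v := by
  have hsingle : ∀ (k : Fin N) (c : ℂ), L (Pi.single k c) = c • L (Pi.single k 1) := by
    intro k c
    have hc : Pi.single k c = c.re • (Pi.single k (1 : ℂ) : Fin N → ℂ)
        + c.im • (Pi.single k Complex.I : Fin N → ℂ) := by
      rw [← Pi.single_smul, ← Pi.single_smul, ← Pi.single_add]
      congr 1
      simp [Complex.real_smul]
    rw [hc, map_add, L.map_smul, L.map_smul, h k]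
    set a := L (Pi.single k 1) with ha
    rw [← algebraMap_smul ℂ c.re a, ← algebraMap_smul ℂ c.im (Complex.I • a), smul_smul,
      ← add_smul]
    congr 1
    simp only [Complex.coe_algebraMap]
    linear_combination Complex.re_add_im c
  intro c v
  have h1 : L (c • v) = ∑ k, (c * v k) • L (Pi.single k 1) := by
    conv_lhs => rw [← Finset.univ_sum_single (c • v)]
    rw [map_sum]
    refine Finset.sum_congr rfl fun k _ => ?_
    rw [Pi.smul_apply, smul_eq_mul, hsingle]
  have h2 : L v = ∑ k, (v k) • L (Pi.single k 1) := by
    conv_lhs => rw [← Finset.univ_sum_single v]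
    rw [map_sum]
    exact Finset.sum_congr rfl fun k _ => hsingle k (v k)
  rw [h1, h2, Finset.smul_sum]
  exact Finset.sum_congr rfl fun k _ => (mul_smul c (v k) _)

open Complex in
lemma diffOn_of_dzbar {N M : ℕ} {Ω : Set (Fin N → ℂ)} (hΩ : IsOpen Ω)
    {f : (Fin N → ℂ) → (Fin M → ℂ)} (hf : DifferentiableOn ℝ f Ω)
    (h0 : ∀ (s : Fin M) (k : Fin N), ∀ z ∈ Ω, wirtingerDzbar (fun w => f w s) z k = 0) :
    DifferentiableOn ℂ f Ω := by
  intro z hz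
  have hd : DifferentiableAt ℝ f z := (hf z hz).differentiableAt (hΩ.mem_nhds hz)
  set L := fderiv ℝ f z with hLdef
  have key : ∀ k, L (Pi.single k Complex.I) = Complex.I • L (Pi.single k 1) := by
    intro k
    funext s
    have h := h0 s k z hz
    unfold wirtingerDzbar at h
    rw [fderiv_component hd s] at h
    simp only [ContinuousLinearMap.comp_apply, ContinuousLinearMap.proj_apply] at h
    have h' : L (Pi.single k 1) s + Complex.I * L (Pi.single k Complex.I) s = 0 := by
      have := mul_eq_zero.mp h
      rcases this with h1 | h1
      · norm_num at h1
      · exact h1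
    rw [Pi.smul_apply, smul_eq_mul]
    linear_combination (-Complex.I) * h' + (L (Pi.single k Complex.I) s) * Complex.I_sq
  have hlin := clinear_of_single L key
  let L' : (Fin N → ℂ) →L[ℂ] (Fin M → ℂ) :=
    { toLinearMap :=
        { toFun := L
          map_add' := fun a b => L.map_add a b
          map_smul' := fun c v => hlin c v }
      cont := L.cont }
  have hres : L'.restrictScalars ℝ = L := by
    ext v
    rfl
  have hF : HasFDerivAt f L' z := hasFDerivAt_of_restrictScalars ℝ hd.hasFDerivAt hres
  exact hF.differentiableAt.differentiableWithinAt

open Complex in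
lemma wirtingerDzbar_conj {N : ℕ} (g : (Fin N → ℂ) → ℂ) (z : Fin N → ℂ) (k : Fin N) :
    wirtingerDzbar (fun w => (starRingEnd ℂ) (g w)) z k
      = (starRingEnd ℂ) (wirtingerDz g z k) := by
  have hfun : (fun w => (starRingEnd ℂ) (g w)) = (Complex.conjCLE ∘ g) := by
    funext w; simp [Complex.conjCLE_apply]
  have hfd : fderiv ℝ (fun w => (starRingEnd ℂ) (g w)) z
      = (Complex.conjCLE : ℂ →L[ℝ] ℂ).comp (fderiv ℝ g z) := by
    rw [hfun]
    exact Complex.conjCLE.comp_fderiv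
  unfold wirtingerDzbar wirtingerDz
  rw [hfd]
  simp only [ContinuousLinearMap.comp_apply, ContinuousLinearEquiv.coe_coe,
    Complex.conjCLE_apply]
  simp only [map_mul, map_sub, map_div₀, map_one, map_ofNat, Complex.conj_I]
  ring

/-- Dichotomy step in the proof of Theorem A: if `f : Ω → ℂ^M` is real analytic on a
connected open set `Ω ⊆ ℂ^N` and `(∂f_r/∂z_j)·(∂f_s/∂z̄_k) ≡ 0` for all indices, then
`f` is holomorphic or its componentwise conjugate is holomorphic. -/
theorem holomorphic_dichotomy (N M : ℕ) (hN : 1 ≤ N) (hM : 1 ≤ M)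
    (Ω : Set (Fin N → ℂ)) (hΩ : IsOpen Ω) (hc : IsConnected Ω)
    (f : (Fin N → ℂ) → (Fin M → ℂ)) (hf : AnalyticOnNhd ℝ f Ω)
    (hprod : ∀ (r s : Fin M) (j k : Fin N), ∀ z ∈ Ω,
      wirtingerDz (fun w => f w r) z j * wirtingerDzbar (fun w => f w s) z k = 0) :
    DifferentiableOn ℂ f Ω ∨
      DifferentiableOn ℂ (fun z i => (starRingEnd ℂ) (f z i)) Ω := by
  classical
  have hdiff : DifferentiableOn ℝ f Ω := fun z hz =>
    (hf z hz).differentiableAt.differentiableWithinAt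
  have hder : AnalyticOnNhd ℝ (fderiv ℝ f) Ω := hf.fderiv_of_isOpen hΩ
  set G : Fin M → Fin N → (Fin N → ℂ) → ℂ := fun r j z =>
    (1 / 2) * ((fderiv ℝ f z (Pi.single j 1)) r
      - Complex.I * (fderiv ℝ f z (Pi.single j Complex.I)) r) with hG
  set H : Fin M → Fin N → (Fin N → ℂ) → ℂ := fun s k z =>
    (1 / 2) * ((fderiv ℝ f z (Pi.single k 1)) s
      + Complex.I * (fderiv ℝ f z (Pi.single k Complex.I)) s) with hH
  have hda : ∀ z ∈ Ω, DifferentiableAt ℝ f z := fun z hz =>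
    (hf z hz).differentiableAt
  have hGeq : ∀ r j z, z ∈ Ω → wirtingerDz (fun w => f w r) z j = G r j z := by
    intro r j z hz
    unfold wirtingerDz
    rw [fderiv_component (hda z hz) r]
    simp [hG]
  have hHeq : ∀ s k z, z ∈ Ω → wirtingerDzbar (fun w => f w s) z k = H s k z := by
    intro s k z hz
    unfold wirtingerDzbar
    rw [fderiv_component (hda z hz) s]
    simp [hH]
  have happ : ∀ (r : Fin M) (v : Fin N → ℂ),
      AnalyticOnNhd ℝ (fun z => (fderiv ℝ f z v) r) Ω := by
    intro r v
    exact ((ContinuousLinearMap.proj r : ((Fin M → ℂ)) →L[ℝ] ℂ).comp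
      (ContinuousLinearMap.apply ℝ (Fin M → ℂ) v)).comp_analyticOnNhd hder
  have hGan : ∀ r j, AnalyticOnNhd ℝ (G r j) Ω := by
    intro r j
    exact analyticOnNhd_const.mul
      ((happ r (Pi.single j 1)).sub (analyticOnNhd_const.mul (happ r (Pi.single j Complex.I))))
  have hHan : ∀ s k, AnalyticOnNhd ℝ (H s k) Ω := by
    intro s k
    exact analyticOnNhd_const.mul
      ((happ s (Pi.single k 1)).add (analyticOnNhd_const.mul (happ s (Pi.single k Complex.I))))
  by_cases hcase : ∀ z ∈ Ω, ∀ (s : Fin M) (k : Fin N), H s k z = 0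
  · left
    apply diffOn_of_dzbar hΩ hdiff
    intro s k z hz
    rw [hHeq s k z hz]
    exact hcase z hz s k
  · right
    push_neg at hcase
    obtain ⟨z₀, hz₀, s₀, k₀, hne⟩ := hcase
    have hzero : ∀ r j, Set.EqOn (G r j) 0 Ω := by
      intro r j
      apply (hGan r j).eqOn_zero_of_preconnected_of_eventuallyEq_zero hc.isPreconnected hz₀
      have hcont : ContinuousAt (H s₀ k₀) z₀ := ((hHan s₀ k₀) z₀ hz₀).continuousAt
      have hnhds : ∀ᶠ w in nhds z₀, H s₀ k₀ w ≠ 0 := hcont.eventually_ne hne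
      filter_upwards [hnhds, hΩ.mem_nhds hz₀] with w hw hwΩ
      have hp := hprod r s₀ j k₀ w hwΩ
      rw [hGeq r j w hwΩ, hHeq s₀ k₀ w hwΩ] at hp
      exact (mul_eq_zero.mp hp).resolve_right hw
    -- the conjugate function
    let C : (Fin M → ℂ) →L[ℝ] (Fin M → ℂ) :=
      ContinuousLinearMap.pi (fun i =>
        (Complex.conjCLE : ℂ →L[ℝ] ℂ).comp (ContinuousLinearMap.proj i))
    have hdf : DifferentiableOn ℝ (fun z i => (starRingEnd ℂ) (f z i)) Ω := by
      have : (fun z i => (starRingEnd ℂ) (f z i)) = (C ∘ f) := by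
        funext z i
        simp [C, Complex.conjCLE_apply]
      rw [this]
      exact C.differentiable.comp_differentiableOn hdiff
    apply diffOn_of_dzbar hΩ hdf
    intro s k z hz
    have : (fun w => (fun i => (starRingEnd ℂ) (f w i)) s) = (fun w => (starRingEnd ℂ) (f w s)) := rfl
    rw [this, wirtingerDzbar_conj (fun w => f w s) z k, hGeq s k z hz, hzero s k hz]
    simp
end

section
/- Let 1 ≤ k ≤ N and let x ∈ ℝ. The vector (1,…,1,x) ∈ ℝ^N (with N−1 coordinates equal to 1 and one coordinate equal to x) belongs to Λ_{k,N} if and only if x ≥ 1 − N/k. In particular, (1,…,1,1 − N/k) ∈ Λ_{k,N}. (Proposition 3.6(4).) -/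
/-- The `l`-th elementary symmetric polynomial of `x ∈ ℝ^N`. -/
def esymm {N : ℕ} (l : ℕ) (x : Fin N → ℝ) : ℝ :=
  ∑ s ∈ Finset.powersetCard l (Finset.univ : Finset (Fin N)), ∏ j ∈ s, x j

/-- The cone `Λ_{k,N} = {x ∈ ℝ^N : σ_l(x) ≥ 0, l = 1,…,k}`. -/
def Lambda (k N : ℕ) : Set (Fin N → ℝ) :=
  {x | ∀ l, 1 ≤ l → l ≤ k → 0 ≤ esymm l x}

lemma count_without (n l : ℕ) :
    ((Finset.powersetCard l (Finset.univ : Finset (Fin (n+1)))).filter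
      (fun s => Fin.last n ∉ s)).card = n.choose l := by
  have h : ((Finset.powersetCard l (Finset.univ : Finset (Fin (n+1)))).filter
      (fun s => Fin.last n ∉ s))
      = Finset.powersetCard l ((Finset.univ : Finset (Fin (n+1))).erase (Fin.last n)) := by
    ext s
    simp only [Finset.mem_filter, Finset.mem_powersetCard, Finset.subset_erase,
      Finset.subset_univ, true_and]
    tauto
  rw [h, Finset.card_powersetCard, Finset.card_erase_of_mem (Finset.mem_univ _)]
  simp

lemma count_with (n l : ℕ) (hl : 1 ≤ l) :
    ((Finset.powersetCard l (Finset.univ : Finset (Fin (n+1)))).filter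
      (fun s => Fin.last n ∈ s)).card = n.choose (l - 1) := by
  have h : ((Finset.powersetCard l (Finset.univ : Finset (Fin (n+1)))).filter
      (fun s => Fin.last n ∈ s)).card
      = (Finset.powersetCard (l-1)
          ((Finset.univ : Finset (Fin (n+1))).erase (Fin.last n))).card := by
    apply Finset.card_nbij' (fun s => s.erase (Fin.last n)) (fun t => insert (Fin.last n) t)
    · intro s hs
      simp only [Finset.mem_coe, Finset.mem_filter, Finset.mem_powersetCard] at hs
      simp only [Finset.mem_coe, Finset.mem_powersetCard, Finset.subset_erase]
      refine ⟨⟨Finset.subset_univ _, Finset.notMem_erase _ _⟩, ?_⟩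
      rw [Finset.card_erase_of_mem hs.2, hs.1.2]
    · intro t ht
      simp only [Finset.mem_coe, Finset.mem_powersetCard, Finset.subset_erase] at ht
      simp only [Finset.mem_coe, Finset.mem_filter, Finset.mem_powersetCard]
      refine ⟨⟨Finset.subset_univ _, ?_⟩, Finset.mem_insert_self _ _⟩
      rw [Finset.card_insert_of_notMem ht.1.2, ht.2]
      omega
    · intro s hs
      simp only [Finset.mem_coe, Finset.mem_filter] at hs
      exact Finset.insert_erase hs.2
    · intro t ht
      simp only [Finset.mem_coe, Finset.mem_powersetCard, Finset.subset_erase] at ht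
      exact Finset.erase_insert ht.1.2
  rw [h, Finset.card_powersetCard, Finset.card_erase_of_mem (Finset.mem_univ _)]
  simp

lemma esymm_ones_x (n : ℕ) (x : ℝ) (l : ℕ) (hl : 1 ≤ l) :
    esymm l (fun i : Fin (n+1) => if i = Fin.last n then x else 1)
      = n.choose l + n.choose (l - 1) * x := by
  unfold esymm
  have hprod : ∀ s ∈ Finset.powersetCard l (Finset.univ : Finset (Fin (n+1))),
      (∏ j ∈ s, (if j = Fin.last n then x else (1:ℝ)))
        = if Fin.last n ∈ s then x else 1 := by
    intro s _
    by_cases h : Fin.last n ∈ s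
    · rw [if_pos h, ← Finset.prod_erase_mul _ _ h, if_pos rfl]
      rw [Finset.prod_eq_one, one_mul]
      intro j hj
      rw [if_neg (Finset.ne_of_mem_erase hj)]
    · rw [if_neg h, Finset.prod_eq_one]
      intro j hj
      rw [if_neg]
      rintro rfl
      exact h hj
  rw [Finset.sum_congr rfl hprod, Finset.sum_ite, Finset.sum_const, Finset.sum_const,
    count_with n l hl, count_without n l]
  ring

lemma esymm_nonneg_iff (n : ℕ) (x : ℝ) (l : ℕ) (hl : 1 ≤ l) (hln : l ≤ n + 1) :
    (0 ≤ esymm l (fun i : Fin (n+1) => if i = Fin.last n then x else 1)) ↔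
      1 - ((n : ℝ) + 1) / l ≤ x := by
  rw [esymm_ones_x n x l hl]
  have hc : 0 < n.choose (l - 1) := Nat.choose_pos (by omega)
  have hcR : (0:ℝ) < n.choose (l - 1) := by exact_mod_cast hc
  have hlR : (0:ℝ) < l := by exact_mod_cast hl
  have hid : (l : ℝ) * n.choose l = n.choose (l - 1) * ((n:ℝ) + 1 - l) := by
    have h0 := Nat.choose_succ_right_eq n (l - 1)
    have h1 : l - 1 + 1 = l := by omega
    rw [h1] at h0
    have h2 : n - (l - 1) = n + 1 - l := by omega
    rw [h2] at h0
    have h3 : ((n.choose l * l : ℕ) : ℝ) = ((n.choose (l-1) * (n + 1 - l) : ℕ) : ℝ) := by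
      rw [h0]
    rw [Nat.cast_mul, Nat.cast_mul, Nat.cast_sub hln] at h3
    push_cast at h3
    linarith
  have hdiv : ((n:ℝ) + 1) / l * l = (n:ℝ) + 1 := div_mul_cancel₀ _ hlR.ne'
  constructor
  · intro h
    have h2 : 0 ≤ (l:ℝ) * ((n.choose l : ℝ) + n.choose (l - 1) * x) := by positivity
    rw [mul_add, ← mul_assoc, hid] at h2
    have h3 : 0 ≤ ((n:ℝ) + 1 - l) + l * x := by
      nlinarith
    nlinarith
  · intro h
    have h3 : 0 ≤ ((n:ℝ) + 1 - l) + l * x := by nlinarith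
    have h2 : 0 ≤ (l:ℝ) * ((n.choose l : ℝ) + n.choose (l - 1) * x) := by
      rw [mul_add, ← mul_assoc, hid]
      nlinarith
    nlinarith

/-- Proposition 3.6(4): with `N = n + 1`, the vector `(1,…,1,x)` belongs to `Λ_{k,N}`
if and only if `x ≥ 1 − N/k`; in particular `(1,…,1,1 − N/k) ∈ Λ_{k,N}`. -/
theorem Lambda_ones_and_x (n k : ℕ) (hk : 1 ≤ k) (hkN : k ≤ n + 1) :
    (∀ x : ℝ,
      (fun i : Fin (n + 1) => if i = Fin.last n then x else 1) ∈ Lambda k (n + 1) ↔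
        1 - ((n : ℝ) + 1) / k ≤ x) ∧
    (fun i : Fin (n + 1) => if i = Fin.last n then 1 - ((n : ℝ) + 1) / k else 1)
      ∈ Lambda k (n + 1) := by
  have main : ∀ x : ℝ,
      (fun i : Fin (n + 1) => if i = Fin.last n then x else 1) ∈ Lambda k (n + 1) ↔
        1 - ((n : ℝ) + 1) / k ≤ x := by
    intro x
    constructor
    · intro h
      have := h k hk le_rfl
      rwa [esymm_nonneg_iff n x k hk hkN] at this
    · intro h l hl hlk
      rw [esymm_nonneg_iff n x l hl (le_trans hlk hkN)]
      have hlR : (0:ℝ) < l := by exact_mod_cast hl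
      have hkR : (0:ℝ) < k := by exact_mod_cast hk
      have : ((n:ℝ) + 1) / k ≤ ((n:ℝ) + 1) / l := by
        apply div_le_div_of_nonneg_left (by positivity) hlR
        exact_mod_cast hlk
      linarith
  exact ⟨main, (main _).mpr le_rfl⟩
end

section
/- Let K, L, k, l be integers with 1 ≤ k ≤ l ≤ L < K, and let y = (y_1,…,y_L) ∈ ℝ^L have all coordinates nonnegative. If for every x = (x_1,…,x_K) ∈ Λ_{k,K} the Hadamard product of y with the truncation of x to its first L coordinates, namely (y_1x_1,…,y_Lx_L), belongs to Λ_{l,L}, then y_1 = ⋯ = y_L = 0. (Lemma 3.7(1).) -/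
lemma esymm_support {N m : ℕ} (x : Fin N → ℝ) (B : Finset (Fin N))
    (hx : ∀ j, j ∉ B → x j = 0) :
    esymm m x = ∑ s ∈ Finset.powersetCard m B, ∏ j ∈ s, x j := by
  unfold esymm
  refine (Finset.sum_subset (Finset.powersetCard_mono (Finset.subset_univ B)) ?_).symm
  intro s hs hns
  rw [Finset.mem_powersetCard] at hs hns
  have : ¬ s ⊆ B := fun h => hns ⟨h, hs.2⟩
  obtain ⟨j, hjs, hjB⟩ := Finset.not_subset.mp this
  exact Finset.prod_eq_zero hjs (hx j hjB)

lemma esymm_pad {L K : ℕ} (h : L ≤ K) (m : ℕ) (w : Fin L → ℝ) (x : Fin K → ℝ)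
    (hx1 : ∀ i : Fin L, x (Fin.castLE h i) = w i)
    (hx2 : ∀ j : Fin K, L ≤ (j : ℕ) → x j = 0) :
    esymm m x = esymm m w := by
  rw [esymm_support x (Finset.univ.map (Fin.castLEEmb h)) (by
    intro j hj
    refine hx2 j ?_
    by_contra hc
    exact hj (Finset.mem_map.mpr ⟨⟨j, Nat.lt_of_not_le hc⟩, Finset.mem_univ _, rfl⟩))]
  rw [Finset.powersetCard_map, Finset.sum_map]
  unfold esymm
  refine Finset.sum_congr rfl fun s hs => ?_
  show (∏ j ∈ (Finset.mapEmbedding (Fin.castLEEmb h)) s, x j) = _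
  rw [Finset.mapEmbedding_apply, Finset.prod_map]
  exact Finset.prod_congr rfl fun i _ => hx1 i

lemma esymm_two_value {N : ℕ} (B : Finset (Fin N)) (i₀ : Fin N) (hi : i₀ ∈ B)
    (v : ℝ) (m : ℕ) (hm : 1 ≤ m) (x : Fin N → ℝ)
    (hx : ∀ j, x j = if j = i₀ then v else if j ∈ B then 1 else 0) :
    esymm m x = ((B.card - 1).choose m : ℝ) + v * ((B.card - 1).choose (m - 1) : ℝ) := by
  rw [esymm_support x B (fun j hj => by
    rw [hx j, if_neg (fun h : j = i₀ => hj (h ▸ hi)), if_neg hj])]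
  rw [← Finset.sum_filter_add_sum_filter_not _ (fun s => i₀ ∈ s)]
  have h1 : ∀ s ∈ (Finset.powersetCard m B).filter (fun s => i₀ ∈ s),
      (∏ j ∈ s, x j) = v := by
    intro s hs
    rw [Finset.mem_filter, Finset.mem_powersetCard] at hs
    rw [← Finset.mul_prod_erase s x hs.2, hx i₀, if_pos rfl]
    rw [Finset.prod_congr rfl (fun j hj => by
      rw [hx j, if_neg (Finset.ne_of_mem_erase hj),
        if_pos (hs.1.1 (Finset.mem_of_mem_erase hj))]), Finset.prod_const_one, mul_one]
  have h2 : ∀ s ∈ (Finset.powersetCard m B).filter (fun s => i₀ ∉ s),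
      (∏ j ∈ s, x j) = 1 := by
    intro s hs
    rw [Finset.mem_filter, Finset.mem_powersetCard] at hs
    refine Finset.prod_eq_one fun j hj => ?_
    rw [hx j, if_neg (fun h : j = i₀ => hs.2 (h ▸ hj)), if_pos (hs.1.1 hj)]
  rw [Finset.sum_congr rfl h1, Finset.sum_congr rfl h2, Finset.sum_const,
    Finset.sum_const, nsmul_eq_mul, nsmul_eq_mul, mul_one]
  have hcard2 : ((Finset.powersetCard m B).filter (fun s => i₀ ∉ s)).card
      = (B.card - 1).choose m := by
    have : (Finset.powersetCard m B).filter (fun s => i₀ ∉ s)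
        = Finset.powersetCard m (B.erase i₀) := by
      ext s
      simp only [Finset.mem_filter, Finset.mem_powersetCard, Finset.subset_erase]
      tauto
    rw [this, Finset.card_powersetCard, Finset.card_erase_of_mem hi]
  have hcard1 : ((Finset.powersetCard m B).filter (fun s => i₀ ∈ s)).card
      = (B.card - 1).choose (m - 1) := by
    rw [← Finset.card_erase_of_mem hi, ← Finset.card_powersetCard]
    refine Finset.card_nbij' (fun s => s.erase i₀) (fun t => insert i₀ t) ?_ ?_ ?_ ?_
    · intro s hs
      rw [Finset.mem_coe, Finset.mem_filter, Finset.mem_powersetCard] at hs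
      rw [Finset.mem_coe, Finset.mem_powersetCard]
      exact ⟨Finset.erase_subset_erase _ hs.1.1,
        by rw [Finset.card_erase_of_mem hs.2, hs.1.2]⟩
    · intro t ht
      rw [Finset.mem_coe, Finset.mem_powersetCard, Finset.subset_erase] at ht
      rw [Finset.mem_coe, Finset.mem_filter, Finset.mem_powersetCard]
      refine ⟨⟨Finset.insert_subset hi ht.1.1, ?_⟩,
        Finset.mem_insert_self _ _⟩
      rw [Finset.card_insert_of_notMem ht.1.2, ht.2]
      omega
    · intro s hs
      rw [Finset.mem_coe, Finset.mem_filter] at hs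
      exact Finset.insert_erase hs.2
    · intro t ht
      rw [Finset.mem_coe, Finset.mem_powersetCard, Finset.subset_erase] at ht
      exact Finset.erase_insert ht.1.2
  rw [hcard1, hcard2]
  ring

lemma esymm_smul {N m : ℕ} (a : ℝ) (x : Fin N → ℝ) :
    esymm m (fun i => a * x i) = a ^ m * esymm m x := by
  unfold esymm
  rw [Finset.mul_sum]
  refine Finset.sum_congr rfl fun s hs => ?_
  rw [Finset.prod_mul_distrib, Finset.prod_const, (Finset.mem_powersetCard.mp hs).2]

lemma esymm_continuous {N m : ℕ} : Continuous fun x : Fin N → ℝ => esymm m x :=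
  continuous_finset_sum _ fun _ _ => continuous_finset_prod _ fun j _ => continuous_apply j
lemma arith1 (Cp Cp1 p k Kr ε : ℝ) (h1 : Cp * p = Cp1 * (Kr - p)) (h2 : ε * k < Kr - k)
    (h3 : 0 < Cp1) (h4 : 0 < p) (h5 : p ≤ k) (h6 : 0 < k) (h7 : 0 < ε) :
    0 ≤ Cp + -ε * Cp1 := by
  have hKk : 0 < Kr - k := lt_trans (by positivity) h2
  have hKr : 0 < Kr := by linarith
  have hKp : (Kr - k) * p ≤ (Kr - p) * k := by nlinarith [mul_nonneg hKr.le (sub_nonneg.mpr h5)]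
  have hchain : (ε * Cp1) * (p * k) ≤ Cp * (p * k) := by
    calc (ε * Cp1) * (p * k) = (ε * k) * (Cp1 * p) := by ring
    _ ≤ (Kr - k) * (Cp1 * p) := mul_le_mul_of_nonneg_right h2.le (by positivity)
    _ = Cp1 * ((Kr - k) * p) := by ring
    _ ≤ Cp1 * ((Kr - p) * k) := mul_le_mul_of_nonneg_left hKp h3.le
    _ = (Cp1 * (Kr - p)) * k := by ring
    _ = (Cp * p) * k := by rw [h1]
    _ = Cp * (p * k) := by ring
  have := le_of_mul_le_mul_right hchain (by positivity)
  linarith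
lemma arith2 (Cm Cm1 m sr ε : ℝ) (h1 : Cm * m = Cm1 * (sr - m)) (h2 : sr - m < ε * m)
    (h3 : 0 < Cm1) (h4 : 0 < m) : Cm + -ε * Cm1 < 0 := by
  have hA : Cm * m < (ε * Cm1) * m := by
    rw [h1]
    calc Cm1 * (sr - m) < Cm1 * (ε * m) := mul_lt_mul_of_pos_left h2 h3
    _ = (ε * Cm1) * m := by ring
  have := lt_of_mul_lt_mul_right hA h4.le
  linarith
/-- Lemma 3.7(1): if `1 ≤ k ≤ l ≤ L < K`, `y ∈ ℝ^L` has nonnegative coordinates, and the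
Hadamard product of `y` with the truncation to the first `L` coordinates of any
`x ∈ Λ_{k,K}` lies in `Λ_{l,L}`, then `y = 0`. -/
theorem lemma37_part1 (K L k l : ℕ) (hk : 1 ≤ k) (hkl : k ≤ l) (hlL : l ≤ L)
    (hLK : L < K) (y : Fin L → ℝ) (hy : ∀ i, 0 ≤ y i)
    (hprod : ∀ x ∈ Lambda k K,
      (fun i : Fin L => y i * x (Fin.castLE hLK.le i)) ∈ Lambda l L) :
    ∀ i, y i = 0 := by
  have hL : 0 < L := lt_of_lt_of_le (lt_of_lt_of_le Nat.zero_lt_one hk) (hkl.trans hlL)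
  haveI : Nonempty (Fin L) := ⟨⟨0, hL⟩⟩
  obtain ⟨i₀, hi₀⟩ := Finite.exists_max y
  suffices hY : y i₀ = 0 by
    intro i; exact le_antisymm (hY ▸ hi₀ i) (hy i)
  by_contra hY
  have hYpos : 0 < y i₀ := (hy i₀).lt_of_ne (Ne.symm hY)
  set S : Finset (Fin L) := Finset.univ.filter (fun i => y i = y i₀) with hS
  have hi₀S : i₀ ∈ S := Finset.mem_filter.mpr ⟨Finset.mem_univ _, rfl⟩
  set s := S.card with hscard
  have hs1 : 1 ≤ s := Finset.card_pos.mpr ⟨i₀, hi₀S⟩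
  have hsL : s ≤ L := (Finset.card_le_univ S).trans_eq (Fintype.card_fin L)
  set m := min l s with hm
  have hm1 : 1 ≤ m := le_min (hk.trans hkl) hs1
  have hml : m ≤ l := min_le_left _ _
  have hms : m ≤ s := min_le_right _ _
  -- real casts
  have hkR : (1:ℝ) ≤ (k:ℝ) := by exact_mod_cast hk
  have hk0 : (0:ℝ) < (k:ℝ) := by linarith
  have hm0 : (0:ℝ) < (m:ℝ) := by exact_mod_cast hm1
  have hKk : (k:ℝ) < (K:ℝ) := by
    have : k < K := lt_of_le_of_lt ((hkl.trans hlL)) hLK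
    exact_mod_cast this
  have hratio : ((s:ℝ) - m) / m < ((K:ℝ) - k) / k := by
    rw [div_lt_div_iff₀ hm0 hk0]
    rcases le_or_gt s l with h | h
    · have hmeq : m = s := min_eq_right h
      have : (s:ℝ) - m = 0 := by rw [hmeq]; ring
      rw [this, zero_mul]
      have : (0:ℝ) < (s:ℝ) := by exact_mod_cast hs1
      nlinarith
    · have hmeq : m = l := min_eq_left h.le
      have hsR : (s:ℝ) ≤ (L:ℝ) := by exact_mod_cast hsL
      have hLKR : (L:ℝ) + 1 ≤ (K:ℝ) := by exact_mod_cast hLK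
      have hklR : (k:ℝ) ≤ (l:ℝ) := by exact_mod_cast hkl
      have hmR : (m:ℝ) = (l:ℝ) := by exact_mod_cast hmeq
      rw [hmR]
      nlinarith
  set ε : ℝ := (((s:ℝ) - m) / m + ((K:ℝ) - k) / k) / 2 with hε
  have hεl : ((s:ℝ) - m) / m < ε := by rw [hε]; linarith
  have hεh : ε < ((K:ℝ) - k) / k := by rw [hε]; linarith
  have hlow0 : (0:ℝ) ≤ ((s:ℝ) - m) / m :=
    div_nonneg (by exact_mod_cast sub_nonneg.mpr (show (m:ℝ) ≤ s by exact_mod_cast hms)) hm0.le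
  have hε0 : 0 < ε := lt_of_le_of_lt hlow0 hεl
  set i₀K : Fin K := Fin.castLE hLK.le i₀ with hi₀K
  set X : Fin K → ℝ := fun j => if j = i₀K then -ε else 1 with hX
  have hXΛ : X ∈ Lambda k K := by
    intro p hp1 hpk
    have hpK : p < K := lt_of_le_of_lt (hpk.trans (hkl.trans hlL)) hLK
    have he := esymm_two_value Finset.univ i₀K (Finset.mem_univ _) (-ε) p hp1 X
      (fun j => by simp [hX])
    rw [Finset.card_univ, Fintype.card_fin] at he
    rw [he]
    have hid : (K-1).choose p * p = (K-1).choose (p-1) * (K - p) := by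
      have h0 := Nat.choose_succ_right_eq (K-1) (p-1)
      have h1 : p - 1 + 1 = p := Nat.succ_pred_eq_of_pos hp1
      have h2 : (K-1) - (p-1) = K - p := by omega
      rw [h1, h2] at h0; exact h0
    have hCpos : 0 < (K-1).choose (p-1) := Nat.choose_pos (by omega)
    have hidR : ((K-1).choose p : ℝ) * p = ((K-1).choose (p-1) : ℝ) * ((K:ℝ) - p) := by
      rw [← Nat.cast_sub hpK.le]; exact_mod_cast hid
    have hCposR : (0:ℝ) < ((K-1).choose (p-1) : ℝ) := by exact_mod_cast hCpos
    have hp0 : (0:ℝ) < (p:ℝ) := by exact_mod_cast hp1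
    have hpkR : (p:ℝ) ≤ (k:ℝ) := by exact_mod_cast hpk
    have hεk : ε * k < (K:ℝ) - k := (lt_div_iff₀ hk0).mp hεh
    exact arith1 _ _ _ _ _ _ hidR hεk hCposR hp0 hpkR hk0 hε0
  have hpow : ∀ n : ℕ,
      (fun i : Fin L => y i ^ (n+1) * X (Fin.castLE hLK.le i)) ∈ Lambda l L := by
    intro n
    induction n with
    | zero => simpa using hprod X hXΛ
    | succ n ih =>
      set w : Fin L → ℝ := fun i => y i ^ (n+1) * X (Fin.castLE hLK.le i) with hw
      set Z : Fin K → ℝ := fun j => if h : (j:ℕ) < L then w ⟨(j:ℕ), h⟩ else 0 with hZ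
      have hZw : ∀ i : Fin L, Z (Fin.castLE hLK.le i) = w i := by
        intro i
        rw [hZ]
        simp
      have hZΛ : Z ∈ Lambda k K := by
        intro p hp1 hpk
        rw [esymm_pad hLK.le p w Z hZw (fun j hj => by rw [hZ]; simp [Nat.not_lt.mpr hj])]
        exact ih p hp1 (hpk.trans hkl)
      have heq : (fun i : Fin L => y i ^ (n+1+1) * X (Fin.castLE hLK.le i))
          = (fun i => y i * Z (Fin.castLE hLK.le i)) := by
        funext i
        rw [hZw i, hw]
        ring
      rw [heq]
      exact hprod Z hZΛ
  set c : ℕ → Fin L → ℝ := fun n i => (y i / y i₀)^(n+1) * X (Fin.castLE hLK.le i) with hc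
  have hcΛ : ∀ n, c n ∈ Lambda l L := by
    intro n p hp1 hpl
    have hcs : esymm p (c n)
        = (((y i₀)⁻¹)^(n+1))^p * esymm p (fun i => y i ^ (n+1) * X (Fin.castLE hLK.le i)) := by
      rw [← esymm_smul]
      congr 1
      funext i
      simp only [hc, div_eq_mul_inv, mul_pow]
      ring
    rw [hcs]
    exact mul_nonneg (pow_nonneg (pow_nonneg (inv_nonneg.mpr hYpos.le) _) p)
      (hpow n p hp1 hpl)
  set xlim : Fin L → ℝ := fun i => if i = i₀ then -ε else if y i = y i₀ then 1 else 0 with hxlim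
  have hinj : ∀ a b : Fin L, Fin.castLE hLK.le a = Fin.castLE hLK.le b → a = b := by
    intro a b hab
    exact Fin.castLE_injective hLK.le hab
  have htend : Filter.Tendsto c Filter.atTop (nhds xlim) := by
    rw [tendsto_pi_nhds]
    intro i
    rcases eq_or_ne i i₀ with h | h
    · subst h
      have hceq : (fun n => c n i) = fun _ => -ε := by
        funext n
        simp [hc, div_self (ne_of_gt hYpos), hX, hi₀K]
      rw [hceq]
      have : xlim i = -ε := by rw [hxlim]; simp
      rw [this]
      exact tendsto_const_nhds
    · rcases eq_or_ne (y i) (y i₀) with he | hne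
      · have hceq : (fun n => c n i) = fun _ => 1 := by
          funext n
          simp only [hc, he]
          rw [div_self (ne_of_gt hYpos), one_pow, one_mul]
          simp only [hX, hi₀K]
          rw [if_neg (fun hcc => h (hinj i i₀ hcc))]
        rw [hceq]
        have : xlim i = 1 := by rw [hxlim]; simp [h, he]
        rw [this]
        exact tendsto_const_nhds
      · have hlt : y i < y i₀ := lt_of_le_of_ne (hi₀ i) hne
        have hr0 : 0 ≤ y i / y i₀ := div_nonneg (hy i) hYpos.le
        have hr1 : y i / y i₀ < 1 := (div_lt_one hYpos).mpr hlt
        have h0 : Filter.Tendsto (fun n : ℕ => (y i / y i₀) ^ n) Filter.atTop (nhds 0) :=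
          tendsto_pow_atTop_nhds_zero_of_lt_one hr0 hr1
        have h1 : Filter.Tendsto (fun n : ℕ => (y i / y i₀) ^ (n+1) * X (Fin.castLE hLK.le i))
            Filter.atTop (nhds (0 * X (Fin.castLE hLK.le i))) :=
          Filter.Tendsto.mul_const _ (h0.comp (Filter.tendsto_add_atTop_nat 1))
        have hx0 : xlim i = 0 := by rw [hxlim]; simp [h, hne]
        rw [hx0]
        simpa using h1
  have hlim : 0 ≤ esymm m xlim :=
    ge_of_tendsto' ((esymm_continuous.tendsto xlim).comp htend) (fun n => hcΛ n m hm1 hml)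
  have hneg : esymm m xlim < 0 := by
    have he := esymm_two_value S i₀ hi₀S (-ε) m hm1 xlim (fun j => by
      rw [hxlim, hS]
      simp)
    rw [← hscard] at he
    rw [he]
    have hid : (s-1).choose m * m = (s-1).choose (m-1) * (s - m) := by
      have h0 := Nat.choose_succ_right_eq (s-1) (m-1)
      have h1 : m - 1 + 1 = m := Nat.succ_pred_eq_of_pos hm1
      have h2 : (s-1) - (m-1) = s - m := by omega
      rw [h1, h2] at h0; exact h0
    have hC1 : 0 < (s-1).choose (m-1) := Nat.choose_pos (by omega)
    have hC1R : (0:ℝ) < ((s-1).choose (m-1) : ℝ) := by exact_mod_cast hC1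
    have hidR : ((s-1).choose m : ℝ) * m = ((s-1).choose (m-1) : ℝ) * ((s:ℝ) - m) := by
      rw [← Nat.cast_sub hms]; exact_mod_cast hid
    have hεm : (s:ℝ) - m < ε * m := (div_lt_iff₀ hm0).mp hεl
    exact arith2 _ _ _ _ _ hidR hεm hC1R hm0
  linarith
end

section
/- Let K, L, k be integers with 1 ≤ k < K ≤ L, and let y = (y_1,…,y_K) ∈ ℝ^K have all coordinates nonnegative. If for every x = (x_1,…,x_K) ∈ Λ_{k,K} the vector (y_1x_1,…,y_Kx_K,0,…,0) ∈ ℝ^L, obtained by the coordinatewise product followed by padding with L−K zeros, belongs to Λ_{k,L}, then y_1 = ⋯ = y_K. (Lemma 3.7(2), case k = l.) -/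
namespace L37

noncomputable def E {K : ℕ} (y : Fin K → ℝ) (A : Finset (Fin K)) (l : ℕ) : ℝ :=
  ∑ s ∈ Finset.powersetCard l A, ∏ m ∈ s, y m

lemma E_nonneg {K : ℕ} {y : Fin K → ℝ} (hy : ∀ i, 0 ≤ y i) (A : Finset (Fin K)) (l : ℕ) :
    0 ≤ E y A l :=
  Finset.sum_nonneg fun _ _ => Finset.prod_nonneg fun m _ => hy m

lemma E_zero {K : ℕ} (y : Fin K → ℝ) (A : Finset (Fin K)) : E y A 0 = 1 := by
  simp [E]

lemma E_congr {K : ℕ} {y z : Fin K → ℝ} {A : Finset (Fin K)} (h : ∀ m ∈ A, y m = z m)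
    (l : ℕ) : E y A l = E z A l := by
  unfold E
  refine Finset.sum_congr rfl fun s hs => Finset.prod_congr rfl fun m hm => ?_
  exact h m ((Finset.mem_powersetCard.1 hs).1 hm)

lemma E_const_one {K : ℕ} {y : Fin K → ℝ} {A : Finset (Fin K)} (h : ∀ m ∈ A, y m = 1)
    (l : ℕ) : E y A l = (A.card.choose l : ℝ) := by
  unfold E
  rw [← Finset.card_powersetCard]
  rw [Finset.card_eq_sum_ones, Nat.cast_sum]
  refine Finset.sum_congr rfl fun s hs => ?_
  rw [Finset.prod_eq_one fun m hm => h m ((Finset.mem_powersetCard.1 hs).1 hm)]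
  simp

lemma E_split {K : ℕ} (y : Fin K → ℝ) {A : Finset (Fin K)} {i : Fin K}
    (hi : i ∈ A) (l : ℕ) :
    E y A (l + 1) = E y (A.erase i) (l + 1) + y i * E y (A.erase i) l := by
  unfold E
  conv_lhs => rw [← Finset.insert_erase hi]
  rw [Finset.powersetCard_succ_insert (Finset.notMem_erase i A), Finset.sum_union, Finset.mul_sum,
    Finset.sum_image]
  · congr 1
    refine Finset.sum_congr rfl fun s hs => ?_
    have his : i ∉ s := fun h =>
      Finset.notMem_erase i A ((Finset.mem_powersetCard.1 hs).1 h)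
    rw [Finset.prod_insert his]
  · intro s hs t ht hst
    have his : i ∉ s := fun h =>
      Finset.notMem_erase i A ((Finset.mem_powersetCard.1 hs).1 h)
    have hit : i ∉ t := fun h =>
      Finset.notMem_erase i A ((Finset.mem_powersetCard.1 ht).1 h)
    rw [← Finset.erase_insert his, ← Finset.erase_insert hit, hst]
  · rw [Finset.disjoint_left]
    intro s hs hs'
    obtain ⟨u, hu, rfl⟩ := Finset.mem_image.1 hs'
    exact Finset.notMem_erase i A ((Finset.mem_powersetCard.1 hs).1 (Finset.mem_insert_self i u))

lemma esymm_eq_E {K : ℕ} (y : Fin K → ℝ) (l : ℕ) : esymm l y = E y Finset.univ l := rfl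

lemma esymm_pad {K L : ℕ} (hKL : K ≤ L) (u : Fin K → ℝ) (l : ℕ) :
    esymm l (fun i : Fin L => if h : (i : ℕ) < K then u ⟨i, h⟩ else 0) = esymm l u := by
  set z : Fin L → ℝ := fun i => if h : (i : ℕ) < K then u ⟨i, h⟩ else 0 with hz
  set T : Finset (Fin L) := Finset.univ.map (Fin.castLEEmb hKL) with hT
  have hzero : ∀ i : Fin L, i ∉ T → z i = 0 := by
    intro i hi
    have : ¬ (i : ℕ) < K := by
      intro h
      exact hi (Finset.mem_map.2 ⟨⟨(i : ℕ), h⟩, Finset.mem_univ _, Fin.ext rfl⟩)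
    simp [hz, this]
  unfold esymm
  rw [← Finset.sum_subset (Finset.powersetCard_mono (Finset.subset_univ T) (n := l))]
  · rw [hT, Finset.powersetCard_map, Finset.sum_map]
    refine Finset.sum_congr rfl fun s _ => ?_
    show ∏ j ∈ s.map (Fin.castLEEmb hKL), z j = _
    rw [Finset.prod_map]
    refine Finset.prod_congr rfl fun m _ => ?_
    simp [hz, Fin.castLEEmb]
  · intro s hs hs'
    have : ¬ s ⊆ T := by
      intro hsub
      exact hs' (Finset.mem_powersetCard.2 ⟨hsub, (Finset.mem_powersetCard.1 hs).2⟩)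
    obtain ⟨i, hi, hiT⟩ := Finset.not_subset.1 this
    exact Finset.prod_eq_zero hi (hzero i hiT)

lemma sum_E_erase {K : ℕ} (y : Fin K → ℝ) (l : ℕ) :
    ∑ j, E y (Finset.univ.erase j) l = ((K - l : ℕ) : ℝ) * E y Finset.univ l := by
  have hfilt : ∀ j : Fin K, Finset.powersetCard l (Finset.univ.erase j)
      = (Finset.powersetCard l (Finset.univ : Finset (Fin K))).filter (fun s => j ∉ s) := by
    intro j
    ext s
    simp only [Finset.mem_powersetCard, Finset.subset_erase, Finset.mem_filter]
    tauto
  calc ∑ j, E y (Finset.univ.erase j) l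
      = ∑ j, ∑ s ∈ Finset.powersetCard l (Finset.univ : Finset (Fin K)),
          (if j ∉ s then ∏ m ∈ s, y m else 0) := by
        refine Finset.sum_congr rfl fun j _ => ?_
        rw [E, hfilt j, Finset.sum_filter]
    _ = ∑ s ∈ Finset.powersetCard l (Finset.univ : Finset (Fin K)),
          ∑ j, (if j ∉ s then ∏ m ∈ s, y m else 0) := Finset.sum_comm
    _ = ∑ s ∈ Finset.powersetCard l (Finset.univ : Finset (Fin K)),
          ((K - l : ℕ) : ℝ) * ∏ m ∈ s, y m := by
        refine Finset.sum_congr rfl fun s hs => ?_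
        rw [← Finset.sum_filter]
        have h1 : Finset.univ.filter (fun j => j ∉ s) = sᶜ := by
          ext j; simp
        rw [h1, Finset.sum_const, Finset.card_compl, Fintype.card_fin,
          (Finset.mem_powersetCard.1 hs).2, nsmul_eq_mul]
    _ = ((K - l : ℕ) : ℝ) * E y Finset.univ l := by rw [E, Finset.mul_sum]

lemma sum_y_E_erase {K : ℕ} (y : Fin K → ℝ) (n : ℕ) :
    ∑ j, y j * E y (Finset.univ.erase j) n = ((n + 1 : ℕ) : ℝ) * E y Finset.univ (n + 1) := by
  have lhs_eq : ∑ j, y j * E y (Finset.univ.erase j) n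
      = ∑ p ∈ Finset.univ.sigma (fun j : Fin K => Finset.powersetCard n (Finset.univ.erase j)),
          y p.1 * ∏ m ∈ p.2, y m := by
    rw [Finset.sum_sigma]
    exact Finset.sum_congr rfl fun j _ => by rw [E, Finset.mul_sum]
  have rhs_eq : ((n + 1 : ℕ) : ℝ) * E y Finset.univ (n + 1)
      = ∑ p ∈ (Finset.powersetCard (n + 1) (Finset.univ : Finset (Fin K))).sigma
          (fun t => t), ∏ m ∈ p.1, y m := by
    rw [Finset.sum_sigma, E, Finset.mul_sum]
    refine Finset.sum_congr rfl fun t ht => ?_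
    show ((n + 1 : ℕ) : ℝ) * ∏ m ∈ t, y m = ∑ _s ∈ t, ∏ m ∈ t, y m
    rw [Finset.sum_const, (Finset.mem_powersetCard.1 ht).2, nsmul_eq_mul]
  rw [lhs_eq, rhs_eq]
  refine Finset.sum_nbij' (fun p => ⟨insert p.1 p.2, p.1⟩) (fun q => ⟨q.2, q.1.erase q.2⟩)
    ?_ ?_ ?_ ?_ ?_
  · rintro ⟨j, s⟩ hp
    simp only [Finset.mem_sigma, Finset.mem_powersetCard, Finset.subset_erase] at hp ⊢
    obtain ⟨-, ⟨hsu, hjs⟩, hcard⟩ := hp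
    exact ⟨⟨Finset.subset_univ _, by rw [Finset.card_insert_of_notMem hjs, hcard]⟩,
      Finset.mem_insert_self _ _⟩
  · rintro ⟨t, j⟩ hq
    simp only [Finset.mem_sigma, Finset.mem_powersetCard] at hq ⊢
    obtain ⟨⟨-, hcard⟩, hjt⟩ := hq
    refine ⟨Finset.mem_univ _, Finset.erase_subset_erase _ (Finset.subset_univ _), ?_⟩
    rw [Finset.card_erase_of_mem hjt, hcard]
    omega
  · rintro ⟨j, s⟩ hp
    simp only [Finset.mem_sigma, Finset.mem_powersetCard, Finset.subset_erase] at hp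
    obtain ⟨-, ⟨-, hjs⟩, -⟩ := hp
    simp [Finset.erase_insert hjs]
  · rintro ⟨t, j⟩ hq
    simp only [Finset.mem_sigma, Finset.mem_powersetCard] at hq
    simp [Finset.insert_erase hq.2]
  · rintro ⟨j, s⟩ hp
    simp only [Finset.mem_sigma, Finset.mem_powersetCard, Finset.subset_erase] at hp
    exact (Finset.prod_insert hp.2.1.2).symm

lemma choose_bound {K k m : ℕ} (hkK : k < K) (hm : m + 1 ≤ k) :
    ((K : ℝ) - k) / k * ((K - 1).choose m) ≤ ((K - 1).choose (m + 1) : ℝ) := by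
  have hk0 : (0 : ℝ) < k := by
    have : 1 ≤ k := by omega
    exact_mod_cast Nat.lt_of_lt_of_le Nat.zero_lt_one this
  rw [div_mul_eq_mul_div, div_le_iff₀ hk0]
  have h1 : (K - 1).choose (m + 1) * (m + 1) = (K - 1).choose m * ((K - 1) - m) :=
    Nat.choose_succ_right_eq (K - 1) m
  have h2 : ((K - 1).choose (m + 1) : ℝ) * ((m : ℝ) + 1)
      = ((K - 1).choose m : ℝ) * ((K : ℝ) - 1 - m) := by
    have hmK : m ≤ K - 1 := by omega
    have hK1 : 1 ≤ K := by omega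
    have := congrArg (Nat.cast (R := ℝ)) h1
    push_cast [Nat.cast_sub hmK, Nat.cast_sub hK1] at this
    linarith [this]
  have hC0 : (0 : ℝ) ≤ ((K - 1).choose m : ℝ) := Nat.cast_nonneg _
  have hmk : (m : ℝ) + 1 ≤ (k : ℝ) := by exact_mod_cast hm
  have hkKR : (k : ℝ) < K := by exact_mod_cast hkK
  nlinarith [mul_nonneg hC0 (sub_nonneg.2 hmk),
    mul_nonneg (mul_nonneg hC0 (sub_nonneg.2 hmk)) (le_of_lt (lt_trans hk0 hkKR))]

end L37

/-- Lemma 3.7(2), case `k = l`: if `1 ≤ k < K ≤ L`, `y ∈ ℝ^K` has nonnegative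
coordinates, and the zero-padded coordinatewise product of `y` with any `x ∈ Λ_{k,K}`
lies in `Λ_{k,L}`, then all coordinates of `y` are equal. -/
theorem lemma37_part2_eq (K L k : ℕ) (hk : 1 ≤ k) (hkK : k < K) (hKL : K ≤ L)
    (y : Fin K → ℝ) (hy : ∀ i, 0 ≤ y i)
    (hprod : ∀ x ∈ Lambda k K,
      (fun i : Fin L => if h : (i : ℕ) < K then y ⟨i, h⟩ * x ⟨i, h⟩ else 0)
        ∈ Lambda k L) :
    ∀ i j, y i = y j := by
  classical
  obtain ⟨n, rfl⟩ : ∃ n, k = n + 1 := ⟨k - 1, by omega⟩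
  have hk0 : (0 : ℝ) < ((n + 1 : ℕ) : ℝ) := by positivity
  have hKkR : ((n + 1 : ℕ) : ℝ) < (K : ℝ) := by exact_mod_cast hkK
  obtain ⟨b, hbdef⟩ : ∃ b : ℝ, b = -(((K : ℝ) - ((n + 1 : ℕ) : ℝ)) / ((n + 1 : ℕ) : ℝ)) :=
    ⟨_, rfl⟩
  have hcard : ∀ j : Fin K, (Finset.univ.erase j).card = K - 1 := fun j => by
    rw [Finset.card_erase_of_mem (Finset.mem_univ j), Finset.card_univ, Fintype.card_fin]
  -- membership of the test vectors
  have hxmem : ∀ j : Fin K, (fun m => if m = j then b else 1) ∈ Lambda (n + 1) K := by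
    intro j l hl1 hlk
    obtain ⟨m, rfl⟩ : ∃ m, l = m + 1 := ⟨l - 1, by omega⟩
    have hone : ∀ m' ∈ Finset.univ.erase j, (fun m : Fin K => if m = j then b else 1) m' = 1 :=
      fun m' hm' => if_neg (Finset.mem_erase.1 hm').1
    have hxj : (if j = j then b else 1) = b := if_pos rfl
    rw [L37.esymm_eq_E, L37.E_split _ (Finset.mem_univ j), L37.E_const_one hone,
      L37.E_const_one hone, hcard j, hxj]
    have hcb := L37.choose_bound (k := n + 1) (m := m) hkK (by omega)
    rw [hbdef]
    nlinarith [hcb]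
  -- the key inequality from the hypothesis
  have key : ∀ (j : Fin K) (m : ℕ), m + 1 ≤ n + 1 →
      ((K : ℝ) - ((n + 1 : ℕ) : ℝ)) * (y j * L37.E y (Finset.univ.erase j) m)
        ≤ ((n + 1 : ℕ) : ℝ) * L37.E y (Finset.univ.erase j) (m + 1) := by
    intro j m hm
    have hz := hprod _ (hxmem j) (m + 1) (by omega) (by omega)
    have heq := L37.esymm_pad hKL (fun mm : Fin K => y mm * (if mm = j then b else 1)) (m + 1)
    have hz' : 0 ≤ esymm (m + 1) (fun mm : Fin K => y mm * (if mm = j then b else 1)) := by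
      rw [← heq]; exact hz
    rw [L37.esymm_eq_E, L37.E_split _ (Finset.mem_univ j)] at hz'
    have hcongr : ∀ l', L37.E (fun mm => y mm * (if mm = j then b else 1))
        (Finset.univ.erase j) l' = L37.E y (Finset.univ.erase j) l' := fun l' =>
      L37.E_congr (fun m' hm' => by rw [if_neg (Finset.mem_erase.1 hm').1, mul_one]) l'
    have hwj : (if j = j then b else 1) = b := if_pos rfl
    rw [hcongr, hcongr, hwj] at hz'
    have hb2 : ((n + 1 : ℕ) : ℝ) * b = -((K : ℝ) - ((n + 1 : ℕ) : ℝ)) := by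
      rw [hbdef]
      field_simp
    have h5 : ((n + 1 : ℕ) : ℝ) * L37.E y (Finset.univ.erase j) (m + 1)
        - ((K : ℝ) - ((n + 1 : ℕ) : ℝ)) * (y j * L37.E y (Finset.univ.erase j) m)
        = ((n + 1 : ℕ) : ℝ) * (L37.E y (Finset.univ.erase j) (m + 1)
            + y j * b * L37.E y (Finset.univ.erase j) m) := by
      linear_combination -(y j * L37.E y (Finset.univ.erase j) m) * hb2
    nlinarith [mul_nonneg hk0.le hz', h5]
  -- equality by averaging
  have hEqAll : ∀ j : Fin K, ((n + 1 : ℕ) : ℝ) * L37.E y (Finset.univ.erase j) (n + 1)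
      = ((K : ℝ) - ((n + 1 : ℕ) : ℝ)) * (y j * L37.E y (Finset.univ.erase j) n) := by
    have hsum : ∑ j : Fin K, (((n + 1 : ℕ) : ℝ) * L37.E y (Finset.univ.erase j) (n + 1)
        - ((K : ℝ) - ((n + 1 : ℕ) : ℝ)) * (y j * L37.E y (Finset.univ.erase j) n)) = 0 := by
      rw [Finset.sum_sub_distrib, ← Finset.mul_sum, ← Finset.mul_sum,
        L37.sum_E_erase, L37.sum_y_E_erase]
      have hcast : ((K - (n + 1) : ℕ) : ℝ) = (K : ℝ) - ((n + 1 : ℕ) : ℝ) := by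
        rw [Nat.cast_sub (le_of_lt hkK)]
      rw [hcast]
      ring
    have h0 := (Finset.sum_eq_zero_iff_of_nonneg
      (fun j _ => sub_nonneg.2 (key j n le_rfl))).1 hsum
    intro j
    have := h0 j (Finset.mem_univ j)
    linarith
  -- chain of inequalities: positivity
  have hchain : ∀ j : Fin K, ∀ m, m ≤ n + 1 →
      (((K : ℝ) - ((n + 1 : ℕ) : ℝ)) / ((n + 1 : ℕ) : ℝ) * y j) ^ m
        ≤ L37.E y (Finset.univ.erase j) m := by
    intro j m
    induction m with
    | zero => intro _; rw [pow_zero, L37.E_zero]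
    | succ m ih =>
      intro hm
      have h1 := ih (by omega)
      have hbase : 0 ≤ ((K : ℝ) - ((n + 1 : ℕ) : ℝ)) / ((n + 1 : ℕ) : ℝ) * y j :=
        mul_nonneg (div_nonneg (by linarith) hk0.le) (hy j)
      have h2 : ((K : ℝ) - ((n + 1 : ℕ) : ℝ)) / ((n + 1 : ℕ) : ℝ) * y j
          * L37.E y (Finset.univ.erase j) m ≤ L37.E y (Finset.univ.erase j) (m + 1) := by
        rw [div_mul_eq_mul_div, div_mul_eq_mul_div, div_le_iff₀ hk0]
        have := key j m hm
        linarith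
      calc (((K : ℝ) - ((n + 1 : ℕ) : ℝ)) / ((n + 1 : ℕ) : ℝ) * y j) ^ (m + 1)
          = (((K : ℝ) - ((n + 1 : ℕ) : ℝ)) / ((n + 1 : ℕ) : ℝ) * y j)
            * (((K : ℝ) - ((n + 1 : ℕ) : ℝ)) / ((n + 1 : ℕ) : ℝ) * y j) ^ m := by ring
        _ ≤ (((K : ℝ) - ((n + 1 : ℕ) : ℝ)) / ((n + 1 : ℕ) : ℝ) * y j)
            * L37.E y (Finset.univ.erase j) m := mul_le_mul_of_nonneg_left h1 hbase
        _ ≤ L37.E y (Finset.univ.erase j) (m + 1) := h2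
  -- main claim
  have hmain : ∀ i j : Fin K, i ≠ j → 0 < y j → y i = y j := by
    intro i j hij hyj
    by_contra hne
    have hiej : i ∈ Finset.univ.erase j := Finset.mem_erase.2 ⟨hij, Finset.mem_univ i⟩
    have hjei : j ∈ Finset.univ.erase i := Finset.mem_erase.2 ⟨hij.symm, Finset.mem_univ j⟩
    have hAsymm : (Finset.univ.erase i).erase j = (Finset.univ.erase j).erase i :=
      Finset.erase_right_comm
    have hsplitj : L37.E y (Finset.univ.erase j) n
        = L37.E y ((Finset.univ.erase j).erase i) n
          + y i * (if n = 0 then 0 else L37.E y ((Finset.univ.erase j).erase i) (n - 1)) := by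
      cases n with
      | zero => rw [L37.E_zero, L37.E_zero]; simp
      | succ m =>
        simp only [Nat.succ_ne_zero, if_false, Nat.add_sub_cancel]
        exact L37.E_split y hiej m
    have hspliti : L37.E y (Finset.univ.erase i) n
        = L37.E y ((Finset.univ.erase j).erase i) n
          + y j * (if n = 0 then 0 else L37.E y ((Finset.univ.erase j).erase i) (n - 1)) := by
      cases n with
      | zero => rw [L37.E_zero, L37.E_zero]; simp
      | succ m =>
        simp only [Nat.succ_ne_zero, if_false, Nat.add_sub_cancel]
        rw [← hAsymm]
        exact L37.E_split y hjei m
    have h1 := hEqAll j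
    have h2 := hEqAll i
    rw [L37.E_split y hiej n, hsplitj] at h1
    rw [L37.E_split y hjei n, hAsymm, hspliti] at h2
    have hzero : (y i - y j) * ((K : ℝ) * L37.E y ((Finset.univ.erase j).erase i) n) = 0 := by
      linear_combination h1 - h2
    have hEne : L37.E y ((Finset.univ.erase j).erase i) n = 0 := by
      rcases mul_eq_zero.1 hzero with h | h
      · exact absurd (by linarith : y i = y j) hne
      · rcases mul_eq_zero.1 h with h' | h'
        · have : (0 : ℝ) < K := by linarith
          linarith
        · exact h'
    -- positivity of E y ((univ.erase j).erase i) n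
    have hEpos : (0 : ℝ) < L37.E y (Finset.univ.erase j) (n + 1) :=
      lt_of_lt_of_le (pow_pos (mul_pos (div_pos (by linarith) hk0) hyj) (n + 1))
        (hchain j (n + 1) le_rfl)
    have hEpos' : (0 : ℝ) < ∑ s ∈ Finset.powersetCard (n + 1) (Finset.univ.erase j),
        ∏ m ∈ s, y m := hEpos
    obtain ⟨s, hs, hsne⟩ := Finset.exists_ne_zero_of_sum_ne_zero hEpos'.ne'
    obtain ⟨hssub, hscard⟩ := Finset.mem_powersetCard.1 hs
    have hpos : ∀ m ∈ s, 0 < y m := fun m hm =>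
      lt_of_le_of_ne (hy m) (Ne.symm (Finset.prod_ne_zero_iff.1 hsne m hm))
    have hcardbound : n ≤ (s.erase i).card := by
      have h := Finset.pred_card_le_card_erase (s := s) (a := i)
      omega
    obtain ⟨t, hts, htc⟩ := Finset.exists_subset_card_eq hcardbound
    have htA : t ∈ Finset.powersetCard n ((Finset.univ.erase j).erase i) :=
      Finset.mem_powersetCard.2 ⟨hts.trans (Finset.erase_subset_erase i hssub), htc⟩
    have hprodpos : 0 < ∏ m ∈ t, y m :=
      Finset.prod_pos fun m hm => hpos m (Finset.mem_of_mem_erase (hts hm))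
    have hle : ∏ m ∈ t, y m ≤ L37.E y ((Finset.univ.erase j).erase i) n :=
      Finset.single_le_sum (f := fun s' => ∏ m ∈ s', y m)
        (fun s' _ => Finset.prod_nonneg fun m _ => hy m) htA
    rw [hEne] at hle
    linarith
  intro i j
  rcases eq_or_ne i j with rfl | hij
  · rfl
  rcases (hy j).lt_or_eq with hj | hj
  · exact hmain i j hij hj
  rcases (hy i).lt_or_eq with hi | hi
  · exact (hmain j i hij.symm hi).symm
  · rw [← hi, ← hj]
end

section
/- Let K, L, k, l be integers with 1 ≤ k < K ≤ L, k < l ≤ L, and let y = (y_1,…,y_K) ∈ ℝ^K have all coordinates nonnegative. If for every x = (x_1,…,x_K) ∈ Λ_{k,K} the vector (y_1x_1,…,y_Kx_K,0,…,0) ∈ ℝ^L, obtained by the coordinatewise product followed by padding with L−K zeros, belongs to Λ_{l,L}, then y_1 = ⋯ = y_K = 0. (Lemma 3.7(2), case k < l.) -/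
lemma esymm_eq_prod_of_support_subset {N m : ℕ} (z : Fin N → ℝ) (W : Finset (Fin N))
    (hW : W.card = m) (hz : ∀ j, j ∉ W → z j = 0) :
    esymm m z = ∏ j ∈ W, z j := by
  unfold esymm
  rw [Finset.sum_eq_single_of_mem W
    (Finset.mem_powersetCard.mpr ⟨Finset.subset_univ _, hW⟩)]
  intro A hA hne
  obtain ⟨_, hAcard⟩ := Finset.mem_powersetCard.mp hA
  have : ¬ A ⊆ W := fun hsub =>
    hne (Finset.eq_of_subset_of_card_le hsub (by rw [hW, hAcard]))
  obtain ⟨j, hjA, hjW⟩ := Finset.not_subset.mp this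
  exact Finset.prod_eq_zero hjA (hz j hjW)

lemma esymm_ones_neg {K m : ℕ} (x : Fin K → ℝ) (P : Finset (Fin K)) (j0 : Fin K)
    (hj0 : j0 ∉ P) (c : ℝ)
    (hx1 : ∀ j ∈ P, x j = 1) (hx0 : x j0 = -c)
    (hxz : ∀ j, j ∉ P → j ≠ j0 → x j = 0) (hm : 1 ≤ m) :
    esymm m x = (P.card.choose m : ℝ) - c * (P.card.choose (m-1)) := by
  obtain ⟨n, rfl⟩ : ∃ n, m = n + 1 := ⟨m - 1, (Nat.succ_pred_eq_of_pos hm).symm⟩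
  unfold esymm
  rw [← Finset.sum_subset
      (Finset.powersetCard_mono (Finset.subset_univ (insert j0 P)))
      (by
        intro A hAu hA
        have hAc := (Finset.mem_powersetCard.mp hAu).2
        have : ¬ A ⊆ insert j0 P := fun hsub =>
          hA (Finset.mem_powersetCard.mpr ⟨hsub, hAc⟩)
        obtain ⟨j, hjA, hjP⟩ := Finset.not_subset.mp this
        simp only [Finset.mem_insert, not_or] at hjP
        exact Finset.prod_eq_zero hjA (hxz j hjP.2 hjP.1))]
  rw [Finset.powersetCard_succ_insert hj0]
  rw [Finset.sum_union]
  · have h1 : ∑ A ∈ Finset.powersetCard (n+1) P, ∏ j ∈ A, x j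
        = (P.card.choose (n+1) : ℝ) := by
      rw [Finset.sum_congr rfl (fun A hA => Finset.prod_eq_one
        (fun j hj => hx1 j ((Finset.mem_powersetCard.mp hA).1 hj)))]
      simp [Finset.card_powersetCard]
    have h2 : ∑ A ∈ (Finset.powersetCard n P).image (insert j0), ∏ j ∈ A, x j
        = -c * (P.card.choose n : ℝ) := by
      have hterm : ∀ B ∈ Finset.powersetCard n P, ∏ j ∈ insert j0 B, x j = -c := by
        intro B hB
        obtain ⟨hBP, _⟩ := Finset.mem_powersetCard.mp hB
        have hj0B : j0 ∉ B := fun h => hj0 (hBP h)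
        rw [Finset.prod_insert hj0B, hx0,
          Finset.prod_eq_one (fun j hj => hx1 j (hBP hj))]
        ring
      rw [Finset.sum_image ?_]
      · rw [Finset.sum_congr rfl hterm]
        simp [Finset.card_powersetCard]
        ring
      · intro B hB B' hB' hEq
        have hBP := (Finset.mem_powersetCard.mp hB).1
        have hB'P := (Finset.mem_powersetCard.mp hB').1
        have h1 : j0 ∉ B := fun h => hj0 (hBP h)
        have h2 : j0 ∉ B' := fun h => hj0 (hB'P h)
        have := congrArg (Finset.erase · j0) hEq
        simpa [Finset.erase_insert, h1, h2] using this
    rw [h1, h2]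
    simp
    ring
  · rw [Finset.disjoint_right]
    intro A hA
    obtain ⟨B, hB, rfl⟩ := Finset.mem_image.mp hA
    intro hA'
    exact hj0 ((Finset.mem_powersetCard.mp hA').1 (Finset.mem_insert_self _ _))

/-- Lemma 3.7(2), case `k < l`: if `1 ≤ k < K ≤ L`, `k < l ≤ L`, `y ∈ ℝ^K` has
nonnegative coordinates, and the zero-padded coordinatewise product of `y` with any
`x ∈ Λ_{k,K}` lies in `Λ_{l,L}`, then `y = 0`. -/
theorem lemma37_part2_lt (K L k l : ℕ) (hk : 1 ≤ k) (hkK : k < K) (hKL : K ≤ L)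
    (hkl : k < l) (hlL : l ≤ L)
    (y : Fin K → ℝ) (hy : ∀ i, 0 ≤ y i)
    (hprod : ∀ x ∈ Lambda k K,
      (fun i : Fin L => if h : (i : ℕ) < K then y ⟨i, h⟩ * x ⟨i, h⟩ else 0)
        ∈ Lambda l L) :
    ∀ i, y i = 0 := by
  classical
  intro i0
  by_contra hi0
  have hyi0 : 0 < y i0 := lt_of_le_of_ne (hy i0) (Ne.symm hi0)
  set S : Finset (Fin K) := Finset.univ.filter (fun j => y j ≠ 0) with hS
  have hi0S : i0 ∈ S := by simp [hS, hi0]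
  have hs1 : 1 ≤ S.card := Finset.card_pos.mpr ⟨i0, hi0S⟩
  have hsK : S.card ≤ K := by simpa using Finset.card_le_univ S
  set t := min S.card (k+1) with ht
  have ht1 : 1 ≤ t := le_min hs1 (by omega)
  have htl : t ≤ l := le_trans (min_le_right _ _) (by omega)
  obtain ⟨T, hTi0, hTS, hTcard⟩ := Finset.exists_subsuperset_card_eq
    (Finset.singleton_subset_iff.mpr hi0S) (by rw [Finset.card_singleton]; exact ht1)
    (min_le_left _ _)
  have hi0T : i0 ∈ T := hTi0 (Finset.mem_singleton_self i0)
  set P : Finset (Fin K) := (T ∪ Sᶜ).erase i0 with hP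
  have hi0P : i0 ∉ P := Finset.notMem_erase _ _
  have hPcard : P.card = t + (K - S.card) - 1 := by
    rw [hP, Finset.card_erase_of_mem (Finset.mem_union_left _ hi0T),
      Finset.card_union_of_disjoint, hTcard, Finset.card_compl]
    · simp [ht]
    · rw [Finset.disjoint_right]
      intro a ha
      simp only [Finset.mem_compl] at ha
      exact fun haT => ha (hTS haT)
  have hkP : k ≤ P.card := by
    rcases le_or_gt S.card (k+1) with h | h
    · have : t = S.card := min_eq_left h
      omega
    · have : t = k + 1 := min_eq_right (by omega)
      omega
  set x : Fin K → ℝ := fun j => if j ∈ P then 1 else if j = i0 then -(1/k) else 0 with hxdef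
  have hx1 : ∀ j ∈ P, x j = 1 := fun j hj => by simp [hxdef, hj]
  have hx0 : x i0 = -(1/k) := by simp [hxdef, hi0P]
  have hxz : ∀ j, j ∉ P → j ≠ i0 → x j = 0 := fun j h1 h2 => by simp [hxdef, h1, h2]
  have hk0 : (0:ℝ) < (k:ℝ) := by exact_mod_cast hk
  have hxLam : x ∈ Lambda k K := by
    intro m hm1 hmk
    rw [esymm_ones_neg x P i0 hi0P (1/k) hx1 hx0 hxz hm1]
    obtain ⟨m', rfl⟩ : ∃ m', m = m' + 1 := ⟨m - 1, (Nat.succ_pred_eq_of_pos hm1).symm⟩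
    have key : P.card.choose m' ≤ k * P.card.choose (m' + 1) := by
      calc P.card.choose m' ≤ P.card.choose m' * (P.card - m') :=
            Nat.le_mul_of_pos_right _ (by omega)
        _ = P.card.choose (m' + 1) * (m' + 1) := (Nat.choose_succ_right_eq _ _).symm
        _ ≤ P.card.choose (m' + 1) * k := Nat.mul_le_mul_left _ hmk
        _ = k * P.card.choose (m' + 1) := Nat.mul_comm _ _
    have keyR : (P.card.choose m' : ℝ) ≤ (k:ℝ) * P.card.choose (m' + 1) := by
      exact_mod_cast key
    have : (1/(k:ℝ)) * (P.card.choose (m'+1-1)) ≤ P.card.choose (m'+1) := by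
      simp only [Nat.add_sub_cancel]
      rw [div_mul_eq_mul_div, div_le_iff₀ hk0]
      linarith
    linarith
  have hzL := hprod x hxLam
  have hzt := hzL t ht1 htl
  set z : Fin L → ℝ :=
    fun i : Fin L => if h : (i : ℕ) < K then y ⟨i, h⟩ * x ⟨i, h⟩ else 0 with hzdef
  set W : Finset (Fin L) := T.image (Fin.castLE hKL) with hW
  have hWcard : W.card = t := by
    rw [hW, Finset.card_image_of_injective _ (Fin.castLE_injective hKL), hTcard]
  have hzval : ∀ j : Fin K, z (Fin.castLE hKL j) = y j * x j := by
    intro j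
    have h : ((Fin.castLE hKL j : Fin L) : ℕ) < K := j.isLt
    rw [hzdef]
    simp only [dif_pos h]
    congr 1
  have hsupp : ∀ j, j ∉ W → z j = 0 := by
    intro j hj
    by_cases h : (j:ℕ) < K
    · have hjc : j = Fin.castLE hKL ⟨(j:ℕ), h⟩ := by ext; simp
      rw [hjc, hzval]
      have hj'T : (⟨(j:ℕ), h⟩ : Fin K) ∉ T := by
        intro hmem
        exact hj (by rw [hjc]; exact Finset.mem_image_of_mem _ hmem)
      by_cases hy' : y ⟨(j:ℕ), h⟩ = 0
      · rw [hy', zero_mul]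
      · have hj'S : (⟨(j:ℕ), h⟩ : Fin K) ∈ S := by simp [hS, hy']
        have hne : (⟨(j:ℕ), h⟩ : Fin K) ≠ i0 := fun h' => hj'T (h' ▸ hi0T)
        have hnP : (⟨(j:ℕ), h⟩ : Fin K) ∉ P := by
          rw [hP]
          intro hmem
          rcases Finset.mem_union.mp (Finset.mem_of_mem_erase hmem) with h1 | h2
          · exact hj'T h1
          · exact (Finset.mem_compl.mp h2) hj'S
        rw [hxz _ hnP hne, mul_zero]
    · rw [hzdef]; simp [h]
  have hesymm : esymm t z = ∏ j ∈ W, z j :=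
    esymm_eq_prod_of_support_subset z W hWcard hsupp
  have hprodW : ∏ j ∈ W, z j < 0 := by
    rw [hW, Finset.prod_image (fun a _ b _ h => Fin.castLE_injective hKL h)]
    rw [Finset.prod_congr rfl (fun j _ => hzval j)]
    have hTsplit : T = insert i0 (T.erase i0) := (Finset.insert_erase hi0T).symm
    rw [hTsplit, Finset.prod_insert (Finset.notMem_erase i0 T)]
    have hpos : 0 < ∏ j ∈ T.erase i0, y j * x j := by
      apply Finset.prod_pos
      intro j hj
      have hjT := Finset.mem_of_mem_erase hj
      have hjne := Finset.ne_of_mem_erase hj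
      have hjP : j ∈ P := by
        rw [hP, Finset.mem_erase]
        exact ⟨hjne, Finset.mem_union_left _ hjT⟩
      rw [hx1 j hjP, mul_one]
      have hyne : y j ≠ 0 := by have := hTS hjT; simpa [hS] using this
      exact lt_of_le_of_ne (hy j) (Ne.symm hyne)
    have hneg : y i0 * x i0 < 0 := by
      rw [hx0]
      have h1k : 0 < 1/(k:ℝ) := by positivity
      nlinarith
    nlinarith
  rw [hzdef] at hesymm
  rw [hesymm] at hzt
  linarith
end

section
/- Consider the set Ω = {(x_1,x_2,x_3) ∈ ℝ³ : x_1 + x_2 + x_3 ≥ 0 and x_1x_2 + x_2x_3 + x_3x_1 ≥ 0}. Then x_1 + 4x_2 + 9x_3 ≥ 0 for every (x_1,x_2,x_3) ∈ Ω, whereas the linear function x_1 + x_2 + 9x_3 attains both strictly positive and strictly negative values on Ω; in particular there exists (x_1,x_2,x_3) ∈ Ω with x_1 + x_2 + 9x_3 < 0. (Example 3.8.) -/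
/-- Example 3.8: on `Ω = {x ∈ ℝ³ : σ_1(x) ≥ 0, σ_2(x) ≥ 0}` the linear function
`x_1 + 4x_2 + 9x_3` is nonnegative, while `x_1 + x_2 + 9x_3` attains both strictly
positive and strictly negative values on `Ω`. -/
theorem example38 :
    (∀ x1 x2 x3 : ℝ,
      (0 ≤ x1 + x2 + x3 ∧ 0 ≤ x1 * x2 + x2 * x3 + x3 * x1) →
        0 ≤ x1 + 4 * x2 + 9 * x3) ∧
    (∃ x1 x2 x3 : ℝ,
      (0 ≤ x1 + x2 + x3 ∧ 0 ≤ x1 * x2 + x2 * x3 + x3 * x1) ∧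
        0 < x1 + x2 + 9 * x3) ∧
    (∃ x1 x2 x3 : ℝ,
      (0 ≤ x1 + x2 + x3 ∧ 0 ≤ x1 * x2 + x2 * x3 + x3 * x1) ∧
        x1 + x2 + 9 * x3 < 0) := by
  refine ⟨fun x1 x2 x3 ⟨h1, h2⟩ => ?_, ⟨1, 1, 1, by norm_num⟩,
    ⟨4, 1, -3/5, by norm_num⟩⟩
  by_contra h
  push_neg at h
  have key : 0 ≤ 4 * (x1 + 4 * x2 + 9 * x3) * (x1 + x2 + x3) := by
    nlinarith [sq_nonneg (2*x1 - 2*x2 + 3*x3), sq_nonneg (2*x2 + 3*x3), h2]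
  have hs1 : x1 + x2 + x3 = 0 := by nlinarith
  have hx3 : x3 = -(x1 + x2) := by linarith
  subst hx3
  nlinarith [sq_nonneg (x1 + x2), sq_nonneg x1, sq_nonneg x2, sq_nonneg (x1 - x2)]
end
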